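/- Fix an integer Q ≥ 1 and an integer N ≥ 1, nonnegative integers P_1,…,P_N, D_0, matrices P_n ∈ ℂ^{P_n×Q} (n = 1,…,N) and D_0 ∈ ℂ^{D_0×Q}, and set P = [P_1; …; P_N] ∈ ℂ^{P×Q} with P = P_1+⋯+P_N. Assume (a) rank([P 1_P]) = Q+1, and (b) there exists m ∈ {1,…,N} such that for every n ∈ {1,…,N}, (null([P_n 1_{P_n}]) + null([P_m 1_{P_m}])) ∩ null([D_0 1_{D_0}]) = {0}. Let R_1,…,R_N ∈ ℂ^{(Q+1)×(Q+1)} be matrices satisfying [P_n 1_{P_n}](R_n − I_{Q+1}) = O for every n, and [D_0 1_{D_0}] R_n = [D_0 1_{D_0}] R_{n'} for all n, n' ∈ {1,…,N}. Then R_n = I_{Q+1} for every n. -/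

import Mathlib

open Matrix

/-- Horizontal augmentation of a matrix with an all-ones column: `[M 1]`. -/
def augOnes {m : Type*} {Q : ℕ} (M : Matrix m (Fin Q) ℂ) :
    Matrix m (Fin Q ⊕ Fin 1) ℂ :=
  Matrix.fromCols M (Matrix.of fun _ _ => (1 : ℂ))

/-- The vertical stack `P = [P_1; …; P_N]` of the per-subchannel pilot matrices. -/
def pilotStack {Q N : ℕ} (Psz : Fin N → ℕ)
    (Pmat : ∀ n : Fin N, Matrix (Fin (Psz n)) (Fin Q) ℂ) :
    Matrix ((n : Fin N) × Fin (Psz n)) (Fin Q) ℂ :=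
  Matrix.of fun i j => Pmat i.1 i.2 j

/-- A matrix is zero iff it kills every vector. -/
lemma mat_eq_zero_of_mulVec {m n : Type*} [Fintype n] [DecidableEq n]
    (M : Matrix m n ℂ) (h : ∀ x : n → ℂ, M *ᵥ x = 0) : M = 0 := by
  ext i j
  have := congrFun (h (Pi.single j 1)) i
  simpa using this

/-- **Algebraic core of the proof of Theorem 1.** Under conditions (a) and (b) of
Theorem 1, any matrices `R_1, …, R_N ∈ ℂ^{(Q+1)×(Q+1)}` satisfying
`[P_n 1](R_n - I) = O` for every `n` and `[D_0 1] R_n = [D_0 1] R_{n'}` for all `n, n'`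
must all equal the identity. -/
theorem transition_matrices_are_identity
    (Q N D0sz : ℕ) (hQ : 1 ≤ Q) (hN : 1 ≤ N)
    (Psz : Fin N → ℕ)
    (Pmat : ∀ n : Fin N, Matrix (Fin (Psz n)) (Fin Q) ℂ)
    (D0mat : Matrix (Fin D0sz) (Fin Q) ℂ)
    (ha : (augOnes (pilotStack Psz Pmat)).rank = Q + 1)
    (hb : ∃ m : Fin N, ∀ n : Fin N,
      (LinearMap.ker (augOnes (Pmat n)).mulVecLin ⊔
        LinearMap.ker (augOnes (Pmat m)).mulVecLin) ⊓
        LinearMap.ker (augOnes D0mat).mulVecLin = ⊥)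
    (R : Fin N → Matrix (Fin Q ⊕ Fin 1) (Fin Q ⊕ Fin 1) ℂ)
    (hR1 : ∀ n : Fin N, augOnes (Pmat n) * (R n - 1) = 0)
    (hR2 : ∀ n n' : Fin N, augOnes D0mat * R n = augOnes D0mat * R n') :
    ∀ n : Fin N, R n = 1 := by
  obtain ⟨m, hm⟩ := hb
  -- Step 1: all R n are equal
  have hall : ∀ n, R n = R m := by
    intro n
    have hz : R n - R m = 0 := by
      apply mat_eq_zero_of_mulVec
      intro x
      set u := (R n - R m) *ᵥ x with hu
      have hsplit : u = (R n - 1) *ᵥ x + (-((R m - 1) *ᵥ x)) := by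
        rw [hu]
        simp [Matrix.sub_mulVec]
      have h1 : (R n - 1) *ᵥ x ∈ LinearMap.ker (augOnes (Pmat n)).mulVecLin := by
        rw [LinearMap.mem_ker]
        show augOnes (Pmat n) *ᵥ ((R n - 1) *ᵥ x) = 0
        rw [Matrix.mulVec_mulVec, hR1 n]
        simp
      have h2 : -((R m - 1) *ᵥ x) ∈ LinearMap.ker (augOnes (Pmat m)).mulVecLin := by
        rw [LinearMap.mem_ker]
        show augOnes (Pmat m) *ᵥ (-((R m - 1) *ᵥ x)) = 0
        rw [Matrix.mulVec_neg, Matrix.mulVec_mulVec, hR1 m]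
        simp
      have hsup : u ∈ LinearMap.ker (augOnes (Pmat n)).mulVecLin ⊔
          LinearMap.ker (augOnes (Pmat m)).mulVecLin := by
        rw [hsplit]
        exact Submodule.add_mem_sup h1 h2
      have hker : u ∈ LinearMap.ker (augOnes D0mat).mulVecLin := by
        rw [LinearMap.mem_ker]
        show augOnes D0mat *ᵥ ((R n - R m) *ᵥ x) = 0
        rw [Matrix.mulVec_mulVec, Matrix.mul_sub, hR2 n m]
        simp
      have := hm n
      have : u ∈ (⊥ : Submodule ℂ (Fin Q ⊕ Fin 1 → ℂ)) := by
        rw [← this]; exact ⟨hsup, hker⟩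
      simpa using this
    have := sub_eq_zero.mp hz
    exact this
  -- Step 2: pilotStack kills R m - 1
  have hstack : augOnes (pilotStack Psz Pmat) * (R m - 1) = 0 := by
    ext i j
    have hrow : ∀ k, augOnes (pilotStack Psz Pmat) i k = augOnes (Pmat i.1) i.2 k := by
      intro k
      cases k with
      | inl q => rfl
      | inr o => rfl
    have hz := congrFun (congrFun (hR1 i.1) i.2) j
    rw [hall i.1] at hz
    rw [Matrix.mul_apply] at hz ⊢
    rw [show ((0 : Matrix ((n : Fin N) × Fin (Psz n)) (Fin Q ⊕ Fin 1) ℂ) i j) = 0 from rfl]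
    rw [show ((0 : Matrix (Fin (Psz i.1)) (Fin Q ⊕ Fin 1) ℂ) i.2 j) = 0 from rfl] at hz
    rw [← hz]
    exact Finset.sum_congr rfl fun k _ => by rw [hrow k]
  -- Step 3: full column rank ⇒ ker = ⊥
  have hker : LinearMap.ker (augOnes (pilotStack Psz Pmat)).mulVecLin = ⊥ := by
    have hrn := LinearMap.finrank_range_add_finrank_ker
      (augOnes (pilotStack Psz Pmat)).mulVecLin
    rw [show Module.finrank ℂ (Fin Q ⊕ Fin 1 → ℂ) = Q + 1 by
        simp [Module.finrank_pi]] at hrn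
    have : Module.finrank ℂ
        (LinearMap.ker (augOnes (pilotStack Psz Pmat)).mulVecLin) = 0 := by
      have : Matrix.rank (augOnes (pilotStack Psz Pmat)) +
          Module.finrank ℂ (LinearMap.ker (augOnes (pilotStack Psz Pmat)).mulVecLin)
          = Q + 1 := hrn
      omega
    exact Submodule.finrank_eq_zero.mp this
  have hRm : R m = 1 := by
    have hz : R m - 1 = 0 := by
      apply mat_eq_zero_of_mulVec
      intro x
      have : (R m - 1) *ᵥ x ∈ LinearMap.ker (augOnes (pilotStack Psz Pmat)).mulVecLin := by
        rw [LinearMap.mem_ker]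
        show augOnes (pilotStack Psz Pmat) *ᵥ ((R m - 1) *ᵥ x) = 0
        rw [Matrix.mulVec_mulVec, hstack]
        simp
      rw [hker] at this
      simpa using this
    exact sub_eq_zero.mp hz
  intro n
  rw [hall n, hRm]
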